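/- arXiv:1611.04137 — 2 statements merged into one kernel-verified Lean document; each statement's English description precedes it below -/
import Mathlib

section
/- Let $R$ be a normal domain and $M$ a finitely generated reflexive $R$-module. Then $\operatorname{End}_R(M)$ is a symmetric $R$-algebra, i.e., $\operatorname{Hom}_R(\operatorname{End}_R(M), R) \cong \operatorname{End}_R(M)$ as $\operatorname{End}_R(M)$-bimodules. -/
open Polynomial in
lemma aux_root_charpoly {F : Type*} [Field F] {n : Type*} [Fintype n] [DecidableEq n]
    (A : Matrix n n F) (q : Polynomial F) (hq : Polynomial.aeval A q = 0)
    {μ : F} (hμ : A.charpoly.IsRoot μ) : q.eval μ = 0 := by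
  have hdet : (Matrix.scalar n μ - A).det = 0 := by
    have h1 : A.charpoly.eval μ
        = (Polynomial.eval (Matrix.scalar n μ) (matPolyEquiv (Matrix.charmatrix A))).det :=
      eval_det _ _
    rw [Matrix.matPolyEquiv_charmatrix, Polynomial.eval_sub, Polynomial.eval_X,
      Polynomial.eval_C] at h1
    rw [← h1]
    exact hμ
  obtain ⟨v, hv0, hv⟩ := (Matrix.exists_mulVec_eq_zero_iff).mpr hdet
  have hAv : A.mulVec v = μ • v := by
    rw [Matrix.sub_mulVec] at hv
    have h2 : (Matrix.scalar n μ).mulVec v = μ • v := by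
      rw [Matrix.scalar_apply]
      ext i
      simp [Matrix.mulVec_diagonal]
    rw [h2] at hv
    exact (sub_eq_zero.mp hv).symm
  have hpow : ∀ k : ℕ, (A ^ k).mulVec v = μ ^ k • v := by
    intro k
    induction k with
    | zero => simp [Matrix.one_mulVec]
    | succ k ih =>
        rw [pow_succ, pow_succ, ← Matrix.mulVec_mulVec, hAv, Matrix.mulVec_smul, ih,
          smul_smul, mul_comm]
  have key : ∀ r : Polynomial F, (Polynomial.aeval A r).mulVec v = r.eval μ • v := by
    intro r
    induction r using Polynomial.induction_on' with
    | add p q hp hq =>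
        rw [map_add, Matrix.add_mulVec, hp, hq, Polynomial.eval_add, add_smul]
    | monomial k a =>
        rw [Polynomial.aeval_monomial, Polynomial.eval_monomial, Algebra.algebraMap_eq_smul_one,
          smul_mul_assoc, one_mul, Matrix.smul_mulVec, hpow, smul_smul]
  have h0 := key q
  rw [hq, Matrix.zero_mulVec] at h0
  rcases smul_eq_zero.mp h0.symm with h | h
  · exact h
  · exact absurd h hv0



open scoped TensorProduct in
lemma aux_trace_integral {R : Type*} [CommRing R] {K : Type*} [Field K] [Algebra R K]
    {V : Type*} [AddCommGroup V] [Module K V] [Module.Finite K V]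
    (u : Module.End K V) (p : Polynomial R) (hp : p.Monic)
    (hu : Polynomial.aeval u (p.map (algebraMap R K)) = 0) :
    IsIntegral R (LinearMap.trace K V u) := by
  classical
  set AK := AlgebraicClosure K with hAK
  rw [← isIntegral_algebraMap_iff (R := R) (A := K) (B := AK) (algebraMap K AK).injective]
  rw [← LinearMap.trace_baseChange u AK]
  set T := LinearMap.baseChange AK u with hT
  have hTq : Polynomial.aeval T (p.map (algebraMap R AK)) = 0 := by
    have h2 : Polynomial.aeval T ((p.map (algebraMap R K)).map (algebraMap K AK)) = 0 := by
      rw [Polynomial.aeval_map_algebraMap]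
      rw [show T = (Module.End.baseChangeHom K AK V) u from rfl,
        Polynomial.aeval_algHom_apply, hu, map_zero]
    rwa [Polynomial.map_map, ← IsScalarTower.algebraMap_eq] at h2
  set b := Module.Free.chooseBasis AK (AK ⊗[K] V) with hb
  rw [LinearMap.trace_eq_matrix_trace AK b]
  set A := LinearMap.toMatrix b b T with hA
  rw [Matrix.trace_eq_sum_roots_charpoly]
  have hroots : ∀ μ ∈ A.charpoly.roots, IsIntegral R μ := by
    intro μ hμ
    have hA0 : Polynomial.aeval A (p.map (algebraMap R AK)) = 0 := by
      have h3 := Polynomial.aeval_algHom_apply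
        (LinearMap.toMatrixAlgEquiv b).toAlgHom T (p.map (algebraMap R AK))
      rw [hTq, map_zero] at h3
      rw [← h3]
      rfl
    have h4 := aux_root_charpoly A _ hA0 (Polynomial.isRoot_of_mem_roots hμ)
    exact ⟨p, hp, by rwa [Polynomial.eval₂_eq_eval_map]⟩
  exact Subalgebra.multiset_sum_mem (integralClosure R AK) hroots


open scoped TensorProduct in
lemma aux_span (R : Type*) [CommRing R] [IsDomain R] (M : Type*) [AddCommGroup M] [Module R M]
    [Module.Finite R M] [NoZeroSMulDivisors R M] :
    ∃ (s : R), s ≠ 0 ∧ ∃ (k : ℕ) (m : Fin k → M) (f : Fin k → (M →ₗ[R] R)),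
      ∀ v : Module.End R M, s • v = ∑ j, LinearMap.smulRight (f j ∘ₗ v) (m j) := by
  classical
  set K := FractionRing R
  set V := K ⊗[R] M
  set ι : M →ₗ[R] V := TensorProduct.mk R K M 1 with hι
  haveI : IsLocalizedModule (nonZeroDivisors R) ι :=
    (isLocalizedModule_iff_isBaseChange (nonZeroDivisors R) K ι).mpr
      (TensorProduct.isBaseChange R M K)
  have hinj : Function.Injective ι := by
    intro a b hab
    have h0 : ι (a - b) = 0 := by rw [map_sub, hab, sub_self]
    obtain ⟨s, hs⟩ := (IsLocalizedModule.eq_zero_iff (nonZeroDivisors R) ι).mp h0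
    have hsne : (s : R) ≠ 0 := nonZeroDivisors.coe_ne_zero s
    rcases smul_eq_zero.mp hs with h | h
    · exact absurd h hsne
    · exact sub_eq_zero.mp h
  have hsp : ⊤ ≤ Submodule.span K (Set.range ι) := by
    rintro x -
    induction x using TensorProduct.induction_on with
    | zero => exact Submodule.zero_mem _
    | tmul c m =>
        have hcm : c ⊗ₜ[R] m = c • (ι m) := by
          show c ⊗ₜ[R] m = c • ((1:K) ⊗ₜ[R] m)
          rw [TensorProduct.smul_tmul', smul_eq_mul, mul_one]
        rw [hcm]
        exact Submodule.smul_mem _ _ (Submodule.subset_span ⟨m, rfl⟩)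
    | add x y hx hy => exact Submodule.add_mem _ hx hy
  obtain ⟨b, hbsub, hbspan, hbind⟩ := exists_linearIndependent K (Set.range ι)
  have hbtop : ⊤ ≤ Submodule.span K (Set.range ((↑) : b → V)) := by
    rw [Subtype.range_coe, hbspan]; exact hsp
  let B : Module.Basis b K V := Module.Basis.mk hbind hbtop
  haveI : Module.Finite K V := Module.Finite.base_change R K M
  haveI : Finite b := hbind.finite_of_isNoetherian (M := V)
  haveI : Fintype b := Fintype.ofFinite _
  have hm : ∀ j : b, ∃ mj : M, ι mj = (j : V) := fun j => hbsub j.2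
  choose mb hmb using hm
  obtain ⟨t, htspan⟩ : (⊤ : Submodule R M).FG := Module.Finite.fg_top
  obtain ⟨s, hs⟩ := IsLocalization.exist_integer_multiples (nonZeroDivisors R)
    (Finset.univ : Finset (b × t)) (fun ji => B.coord ji.1 (ι ji.2))
  have halg : Function.Injective (Algebra.linearMap R K) := IsFractionRing.injective R K
  have hint : ∀ (j : b) (x : M),
      ((s : R) • ((B.coord j).restrictScalars R ∘ₗ ι)) x
        ∈ LinearMap.range (Algebra.linearMap R K) := by
    intro j x
    have hx : x ∈ (⊤ : Submodule R M) := trivial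
    rw [← htspan] at hx
    refine Submodule.span_induction ?_ ?_ ?_ ?_ hx
    · intro y hy
      obtain ⟨r, hr⟩ := hs (j, ⟨y, hy⟩) (Finset.mem_univ _)
      refine ⟨r, ?_⟩
      simpa [Algebra.smul_def] using hr
    · simp
    · intro y z _ _ hy hz; rw [map_add]; exact Submodule.add_mem _ hy hz
    · intro r y _ hy; rw [map_smul]; exact Submodule.smul_mem _ _ hy
  let F : b → (M →ₗ[R] R) := fun j =>
    (LinearEquiv.ofInjective (Algebra.linearMap R K) halg).symm.toLinearMap ∘ₗ
      LinearMap.codRestrict (LinearMap.range (Algebra.linearMap R K))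
        ((s : R) • ((B.coord j).restrictScalars R ∘ₗ ι)) (hint j)
  have hF : ∀ (j : b) (x : M), algebraMap R K (F j x) = (s : R) • B.coord j (ι x) := by
    intro j x
    have h1 : Algebra.linearMap R K (F j x)
        = ((s : R) • ((B.coord j).restrictScalars R ∘ₗ ι)) x := by
      have h2 := (LinearEquiv.ofInjective (Algebra.linearMap R K) halg).apply_symm_apply
        (LinearMap.codRestrict (LinearMap.range (Algebra.linearMap R K))
          ((s : R) • ((B.coord j).restrictScalars R ∘ₗ ι)) (hint j) x)
      have h3 := congrArg Subtype.val h2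
      rwa [LinearEquiv.ofInjective_apply] at h3
    simpa using h1
  -- conclude
  have hsne : (s : R) ≠ 0 := nonZeroDivisors.coe_ne_zero s
  -- reindex by Fin
  obtain ⟨k, ⟨eqv⟩⟩ : ∃ k, Nonempty (b ≃ Fin k) := ⟨Fintype.card b, ⟨Fintype.equivFin b⟩⟩
  refine ⟨(s : R), hsne, k, fun i => mb (eqv.symm i), fun i => F (eqv.symm i), ?_⟩
  intro v
  apply LinearMap.ext
  intro x
  apply hinj
  have hrepr : ι (v x) = ∑ j : b, B.coord j (ι (v x)) • (j : V) := by
    conv_lhs => rw [← B.sum_repr (ι (v x))]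
    refine Finset.sum_congr rfl fun j _ => ?_
    rw [Module.Basis.coord_apply, Module.Basis.mk_apply]
  calc ι (((s : R) • v) x) = (s : R) • ι (v x) := by
        rw [LinearMap.smul_apply, map_smul]
    _ = (s : R) • ∑ j : b, B.coord j (ι (v x)) • (j : V) := by rw [← hrepr]
    _ = ∑ j : b, ((s : R) • B.coord j (ι (v x))) • (j : V) := by
        rw [Finset.smul_sum]
        refine Finset.sum_congr rfl fun j _ => ?_
        rw [smul_assoc]
    _ = ∑ j : b, F j (v x) • (j : V) := by
        refine Finset.sum_congr rfl fun j _ => ?_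
        rw [← hF, algebraMap_smul]
    _ = ι (∑ j : b, F j (v x) • mb j) := by
        rw [map_sum]
        refine Finset.sum_congr rfl fun j _ => ?_
        rw [map_smul, hmb]
    _ = ι ((∑ i : Fin k, LinearMap.smulRight (F (eqv.symm i) ∘ₗ v) (mb (eqv.symm i))) x) := by
        congr 1
        rw [LinearMap.sum_apply]
        rw [← Equiv.sum_comp eqv.symm (fun j => F j (v x) • mb j)]
        refine Finset.sum_congr rfl fun i _ => ?_
        simp [LinearMap.smulRight_apply]





open scoped TensorProduct in
theorem endomorphism_ring_is_symmetric (R : Type*) [CommRing R] [IsDomain R]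
    [IsNoetherianRing R] [IsIntegrallyClosed R]  -- `R` is a Noetherian normal domain
    (M : Type*) [AddCommGroup M] [Module R M] [Module.Finite R M]
    [Module.IsReflexive R M] :
    ∃ e : Module.End R M ≃ₗ[R] (Module.End R M →ₗ[R] R),
      ∀ a x b y : Module.End R M, e (a * x * b) y = e x (b * y * a) := by
  classical
  set K := FractionRing R with hK
  set V := K ⊗[R] M with hV
  haveI : Module.Finite K V := Module.Finite.base_change R K M
  have halg : Function.Injective (algebraMap R K) := IsFractionRing.injective R K
  -- the trace function
  have tr_ex : ∀ u : Module.End R M,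
      ∃ r : R, algebraMap R K r = LinearMap.trace K V (LinearMap.baseChange K u) := by
    intro u
    refine IsIntegrallyClosed.isIntegral_iff.mp ?_
    obtain ⟨p, hpm, hpu⟩ := Algebra.IsIntegral.isIntegral (R := R) u
    refine aux_trace_integral _ p hpm ?_
    rw [Polynomial.aeval_map_algebraMap]
    rw [show LinearMap.baseChange K u = (Module.End.baseChangeHom R K M) u from rfl,
      Polynomial.aeval_algHom_apply]
    rw [show Polynomial.aeval u p = 0 from by rwa [Polynomial.aeval_def], map_zero]
  choose trf htrf using tr_ex
  have tr_add : ∀ u v, trf (u + v) = trf u + trf v := by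
    intro u v
    apply halg
    rw [map_add, htrf, htrf, htrf, LinearMap.baseChange_add, map_add]
  have tr_smul : ∀ (r : R) u, trf (r • u) = r * trf u := by
    intro r u
    apply halg
    rw [htrf, LinearMap.baseChange_smul, LinearMap.map_smul_of_tower, map_mul, htrf,
      Algebra.smul_def]
  have tr_cyc : ∀ u v, trf (u * v) = trf (v * u) := by
    intro u v
    apply halg
    rw [htrf, htrf, LinearMap.baseChange_mul, LinearMap.baseChange_mul,
      LinearMap.trace_mul_comm]
  have tr_rank1 : ∀ (f : M →ₗ[R] R) (m : M), trf (LinearMap.smulRight f m) = f m := by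
    intro f m
    apply halg
    rw [htrf]
    set f' : V →ₗ[K] K :=
      (TensorProduct.AlgebraTensorModule.rid R K K).toLinearMap.comp
        (LinearMap.baseChange K f) with hf'
    have h1 : LinearMap.baseChange K (LinearMap.smulRight f m)
        = dualTensorHom K V V (f' ⊗ₜ[K] ((1:K) ⊗ₜ[R] m)) := by
      apply LinearMap.restrictScalars_injective R
      apply TensorProduct.ext'
      intro c n
      simp only [LinearMap.restrictScalars_apply, LinearMap.baseChange_tmul,
        LinearMap.smulRight_apply, dualTensorHom_apply, hf', LinearMap.comp_apply,
        LinearEquiv.coe_coe, TensorProduct.AlgebraTensorModule.rid_tmul]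
      rw [TensorProduct.tmul_smul, TensorProduct.smul_tmul', dualTensorHom_apply, TensorProduct.smul_tmul']
      congr 1
      simp [Algebra.smul_def, smul_eq_mul, mul_one]
    rw [h1, LinearMap.trace_eq_contract_apply, contractLeft_apply]
    simp only [hf', LinearMap.comp_apply, LinearMap.baseChange_tmul, LinearEquiv.coe_coe,
      TensorProduct.AlgebraTensorModule.rid_tmul]
    rw [LinearMap.baseChange_tmul, TensorProduct.AlgebraTensorModule.rid_tmul,
      Algebra.smul_def, mul_one]
  -- the trace as a linear map
  set tr : Module.End R M →ₗ[R] R :=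
    { toFun := trf
      map_add' := tr_add
      map_smul' := fun r u => by simp [tr_smul r u, smul_eq_mul] } with htr
  -- the pairing
  set P : Module.End R M →ₗ[R] (Module.End R M →ₗ[R] R) :=
    LinearMap.mk₂ R (fun u y => tr (u * y))
      (fun u u' y => by rw [add_mul, map_add])
      (fun c u y => by rw [smul_mul_assoc, map_smul, smul_eq_mul])
      (fun u y y' => by rw [mul_add, map_add])
      (fun c u y => by rw [mul_smul_comm, map_smul, smul_eq_mul]) with hP
  have hcomp : ∀ (u : Module.End R M) (f : M →ₗ[R] R) (m : M),
      u * LinearMap.smulRight f m = LinearMap.smulRight f (u m) := by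
    intro u f m
    apply LinearMap.ext
    intro n
    simp [Module.End.mul_apply, LinearMap.smulRight_apply, map_smul]
  have hPinj : Function.Injective P := by
    rw [injective_iff_map_eq_zero]
    intro u hu
    apply LinearMap.ext
    intro m
    have h2 : ∀ f : Module.Dual R M, f (u m) = 0 := by
      intro f
      have h3 := LinearMap.congr_fun hu (LinearMap.smulRight f m)
      simp only [hP, LinearMap.mk₂_apply, LinearMap.zero_apply] at h3
      rwa [hcomp, htr, LinearMap.coe_mk, AddHom.coe_mk, tr_rank1] at h3
    have h4 : Module.Dual.eval R M (u m) = 0 := by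
      apply LinearMap.ext; intro f; simpa using h2 f
    have := (Module.bijective_dual_eval R M).injective
      (by rw [h4, map_zero] : Module.Dual.eval R M (u m) = Module.Dual.eval R M 0)
    simpa using this
  haveI : NoZeroSMulDivisors R M := ⟨fun h => smul_eq_zero.mp h⟩
  obtain ⟨s, hsne, k, mj, fj, hrep⟩ := aux_span R M
  have hPsurj : Function.Surjective P := by
    intro h
    set N : M →ₗ[R] Module.Dual R (Module.Dual R M) :=
      (LinearMap.llcomp R (Module.Dual R M) (Module.End R M) R h) ∘ₗ
        (LinearMap.smulRightₗ : (M →ₗ[R] R) →ₗ[R] M →ₗ[R] (M →ₗ[R] M)).flip with hN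
    set u : Module.End R M := (Module.evalEquiv R M).symm.toLinearMap ∘ₗ N with hu
    have key : ∀ (f : M →ₗ[R] R) (m : M), f (u m) = h (LinearMap.smulRight f m) := by
      intro f m
      rw [hu]
      simp only [LinearMap.comp_apply, LinearEquiv.coe_coe]
      rw [Module.apply_evalEquiv_symm_apply]
      simp only [hN, LinearMap.comp_apply, LinearMap.llcomp_apply, LinearMap.flip_apply]
      rfl
    refine ⟨u, ?_⟩
    apply LinearMap.ext
    intro v
    have hstep : ∀ (f : M →ₗ[R] R) (m : M),
        tr (u * LinearMap.smulRight f m) = h (LinearMap.smulRight f m) := by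
      intro f m
      rw [hcomp, htr]
      show trf (LinearMap.smulRight f (u m)) = _
      rw [tr_rank1, key]
    have h1 : s * tr (u * v) = s * h v := by
      calc s * tr (u * v) = tr (u * (s • v)) := by
            rw [mul_smul_comm, map_smul, smul_eq_mul]
        _ = tr (u * ∑ j, LinearMap.smulRight (fj j ∘ₗ v) (mj j)) := by rw [hrep v]
        _ = ∑ j, tr (u * LinearMap.smulRight (fj j ∘ₗ v) (mj j)) := by
            rw [Finset.mul_sum, map_sum]
        _ = ∑ j, h (LinearMap.smulRight (fj j ∘ₗ v) (mj j)) := by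
            exact Finset.sum_congr rfl fun j _ => hstep _ _
        _ = h (s • v) := by rw [hrep v, map_sum]
        _ = s * h v := by rw [map_smul, smul_eq_mul]
    have h2 := mul_left_cancel₀ hsne h1
    simpa [hP] using h2
  refine ⟨LinearEquiv.ofBijective P ⟨hPinj, hPsurj⟩, ?_⟩
  intro a x b y
  simp only [LinearEquiv.ofBijective_apply, hP, LinearMap.mk₂_apply, htr,
    LinearMap.coe_mk, AddHom.coe_mk]
  show trf (a * x * b * y) = trf (x * (b * y * a))
  have := tr_cyc a (x * (b * (y)))
  calc trf (a * x * b * y) = trf (a * (x * (b * y))) := by rw [mul_assoc, mul_assoc]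
    _ = trf ((x * (b * y)) * a) := tr_cyc _ _
    _ = trf (x * (b * y * a)) := by rw [mul_assoc, mul_assoc]
end

section
/- Let $R$ be a Cohen–Macaulay normal domain with canonical module $\omega_R$, and let $\nu: \operatorname{refl}(R) \to \operatorname{refl}(R)$ be the Nakayama functor $\nu(X) = (\omega_R \otimes_R X)^{**} = \operatorname{Hom}_R(\operatorname{Hom}_R(X,R), \omega_R)$. Then for all finitely generated reflexive $R$-modules $X, Y$ there are natural isomorphisms $\operatorname{Hom}_R(Y, \nu(X)) \cong \operatorname{Hom}_R(\operatorname{Hom}_R(X,Y), \omega_R)$. -/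
/-!
STATEMENT 16: Let `R` be a Cohen–Macaulay normal domain with canonical module `ω`, and let
`ν(X) = Hom_R(Hom_R(X, R), ω)` (`= (ω ⊗ X)**`) be the Nakayama functor on finitely
generated reflexive modules.  Then for all finitely generated reflexive `R`-modules `X, Y`
there are natural isomorphisms `Hom_R(Y, ν(X)) ≅ Hom_R(Hom_R(X, Y), ω)`.
(A canonical module of a normal CM domain is a finitely generated reflexive module of
rank one; these are the hypotheses imposed on `ω`.)
-/

open scoped TensorProduct

/-- The depth of the `T`-module `X` along the ideal `I`: the supremum of lengths of
`X`-regular sequences contained in `I`. -/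
noncomputable def idealDepth (T : Type*) [CommRing T] (I : Ideal T)
    (X : Type*) [AddCommGroup X] [Module T X] : ℕ∞ :=
  sSup {n : ℕ∞ | ∃ rs : List T, n = rs.length ∧ (∀ r ∈ rs, r ∈ I) ∧
    RingTheory.Sequence.IsRegular X rs}

/-- A commutative ring is Cohen–Macaulay if, for every prime `p`, the depth of the local
ring `R_p` equals its Krull dimension. -/
noncomputable def IsCohenMacaulayRing (R : Type*) [CommRing R] : Prop :=
  ∀ (p : Ideal R) [p.IsPrime],
    (idealDepth (Localization.AtPrime p) (IsLocalRing.maximalIdeal (Localization.AtPrime p))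
        (Localization.AtPrime p) : WithBot ℕ∞) = ringKrullDim (Localization.AtPrime p)

/-! ### Auxiliary theory: quasi-bases of a finitely generated module

A *quasi-basis with denominator `c`* of an `R`-module `X` is a pair of finite families
`x i : X`, `f i : X →ₗ[R] R` such that `∑ i, f i v • x i = c • v` for all `v`.  Such a
quasi-basis exists with `c ∉ p` whenever the localization of `X` at the prime `p` is free. -/

section QB

open Finset

variable (R : Type*) [CommRing R] (X : Type*) [AddCommGroup X] [Module R X]

/-- `X` admits a quasi-basis with denominator `c`. -/
def HasQB (c : R) : Prop :=
  ∃ (n : ℕ) (x : Fin n → X) (f : Fin n → (X →ₗ[R] R)), ∀ v : X, ∑ i, f i v • x i = c • v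

/-- The set of denominators of quasi-bases is an ideal. -/
def qbIdeal : Ideal R where
  carrier := {c | HasQB R X c}
  zero_mem' := ⟨0, Fin.elim0, Fin.elim0, fun v => by simp⟩
  add_mem' := by
    rintro a b ⟨n, x, f, hx⟩ ⟨m, y, g, hy⟩
    refine ⟨n + m, Fin.append x y, Fin.append f g, fun v => ?_⟩
    rw [Fin.sum_univ_add]
    simp only [Fin.append_left, Fin.append_right]
    rw [hx v, hy v, ← add_smul]
  smul_mem' := by
    rintro r a ⟨n, x, f, hx⟩
    refine ⟨n, x, fun i => r • f i, fun v => ?_⟩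
    have h2 : (∑ i, ((r • f i) v) • x i : X) = r • ∑ i, f i v • x i := by
      rw [Finset.smul_sum]
      exact Finset.sum_congr rfl fun i _ => by
        simp only [LinearMap.smul_apply, smul_eq_mul, smul_smul]
    rw [h2, hx v, smul_smul, smul_eq_mul]

variable {R X}

theorem HasQB.expand {c : R} {n : ℕ} {x : Fin n → X} {f : Fin n → (X →ₗ[R] R)}
    (h : ∀ v : X, ∑ i, f i v • x i = c • v) (φ : X →ₗ[R] R) :
    ∑ i, φ (x i) • f i = c • φ := by
  ext v
  have h1 : φ (c • v) = φ (∑ i, f i v • x i) := by rw [h]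
  simp only [map_smul, map_sum, smul_eq_mul] at h1
  simp only [LinearMap.sum_apply, LinearMap.smul_apply, smul_eq_mul]
  rw [h1]
  exact Finset.sum_congr rfl fun i _ => mul_comm _ _

theorem HasQB.smul_hom {Y : Type*} [AddCommGroup Y] [Module R Y]
    {c : R} {n : ℕ} {x : Fin n → X} {f : Fin n → (X →ₗ[R] R)}
    (hqb : ∀ v : X, ∑ i, f i v • x i = c • v) (h : X →ₗ[R] Y) :
    c • h = ∑ i, (f i).smulRight (h (x i)) := by
  ext v
  have : h (c • v) = h (∑ i, f i v • x i) := by rw [hqb]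
  simp only [map_smul, map_sum] at this
  simp only [LinearMap.smul_apply, LinearMap.sum_apply, LinearMap.smulRight_apply]
  rw [this]

end QB

/-! ### Existence of quasi-bases from freeness of a localization -/

section Localized

variable {R : Type*} [CommRing R] [IsDomain R] [IsNoetherianRing R]
variable {X : Type*} [AddCommGroup X] [Module R X] [Module.Finite R X]

theorem exists_hasQB_mem (S : Submonoid R) (hS : S ≤ nonZeroDivisors R)
    [Module.Free (Localization S) (LocalizedModule S X)] :
    ∃ c ∈ S, HasQB R X c := by
  classical
  letI : Module.FinitePresentation R X := Module.finitePresentation_of_finite R X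
  set A := Localization S with hA
  set Xp := LocalizedModule S X with hXp
  have hfin : Module.Finite A Xp := inferInstance
  obtain ⟨n, π, hπ⟩ := Module.Finite.exists_fin' A Xp
  obtain ⟨σ, hσ⟩ := Module.projective_lifting_property π LinearMap.id hπ
  set mkl : X →ₗ[R] Xp := LocalizedModule.mkLinearMap S X with hmkl
  have hrep : ∀ v : Xp, ∃ (m : X) (s : S), v = LocalizedModule.mk m s := fun v =>
    LocalizedModule.induction_on (fun m s => ⟨m, s, rfl⟩) v
  choose xe se hxe using fun k : Fin n => hrep (π (fun j => if k = j then 1 else 0))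
  set u : Fin n → Aˣ := fun k => (IsLocalization.map_units A (se k)).unit with hu
  set κ : Fin n → (Xp →ₗ[A] A) := fun k => ((↑(u k)⁻¹ : A) • ((LinearMap.proj k).comp σ)) with hκ
  -- the key expansion in the localized module
  have hek : ∀ k, mkl (xe k) = (algebraMap R A (se k)) • π (fun j => if k = j then 1 else 0) := by
    intro k
    rw [hxe k]
    show LocalizedModule.mk (xe k) 1 = _
    rw [← Localization.mk_one_eq_algebraMap, LocalizedModule.mk_smul_mk, one_mul]
    exact (LocalizedModule.mk_cancel (se k) (xe k)).symm
  have hv : ∀ v : Xp, ∑ k, κ k v • mkl (xe k) = v := by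
    intro v
    have h1 : ∀ k, κ k v • mkl (xe k) = σ v k • π (fun j => if k = j then 1 else 0) := by
      intro k
      rw [hek k]
      have hcoe : (algebraMap R A) ↑(se k) = ↑(u k) := ((IsLocalization.map_units A (se k)).unit_spec).symm
      rw [hcoe, hκ]
      simp only [LinearMap.smul_apply, LinearMap.coe_comp, Function.comp_apply, LinearMap.proj_apply,
        smul_eq_mul]
      rw [smul_smul, mul_assoc, mul_comm _ (↑(u k) : A), ← mul_assoc, Units.inv_mul, one_mul]
    rw [Finset.sum_congr rfl fun k _ => h1 k, ← LinearMap.pi_apply_eq_sum_univ π (σ v)]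
    have := LinearMap.ext_iff.mp hσ v
    simpa using this
  -- generators of X
  obtain ⟨N, g, hg⟩ := Module.Finite.exists_fin (R := R) (M := X)
  choose rk sk hks using fun kt : Fin n × Fin N => IsLocalization.exists_mk'_eq S
    (κ kt.1 (mkl (g kt.2)))
  set d : R := ∏ kt : Fin n × Fin N, ((sk kt : R)) with hd
  have hdS : d ∈ S := Submonoid.prod_mem S (fun kt _ => (sk kt).2)
  have hclear : ∀ k t, ∃ r₀ : R, algebraMap R A r₀ = d • κ k (mkl (g t)) := by
    intro k t
    obtain ⟨e, he⟩ := Finset.dvd_prod_of_mem (fun kt : Fin n × Fin N => ((sk kt : R)))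
      (Finset.mem_univ (k, t))
    refine ⟨e * rk (k, t), ?_⟩
    rw [Algebra.smul_def, ← hks (k, t), hd, he, map_mul, map_mul,
      ← IsLocalization.mk'_spec A (rk (k, t)) (sk (k, t))]
    ring
  set T : Fin n → (X →ₗ[R] A) := fun k => d • (((κ k).restrictScalars R).comp mkl) with hT
  have hTmem : ∀ k (x : X), T k x ∈ LinearMap.range (Algebra.linearMap R A) := by
    intro k x
    have hx : x ∈ Submodule.span R (Set.range g) := by rw [hg]; trivial
    induction hx using Submodule.span_induction with
    | mem y hy =>
      obtain ⟨t, rfl⟩ := hy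
      obtain ⟨r₀, hr₀⟩ := hclear k t
      exact ⟨r₀, by simpa [hT] using hr₀⟩
    | zero => rw [map_zero]; exact zero_mem _
    | add y z _ _ hy hz => rw [map_add]; exact add_mem hy hz
    | smul r y _ hy => rw [map_smul]; exact Submodule.smul_mem _ r hy
  have halg : Function.Injective (algebraMap R A) := IsLocalization.injective A hS
  set eRA : R ≃ₗ[R] LinearMap.range (Algebra.linearMap R A) :=
    LinearEquiv.ofInjective (Algebra.linearMap R A) halg with heRA
  set ψ : Fin n → (X →ₗ[R] R) := fun k =>
    (eRA.symm : LinearMap.range (Algebra.linearMap R A) →ₗ[R] R).comp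
      ((T k).codRestrict _ (hTmem k)) with hψdef
  have hψ : ∀ k x, algebraMap R A (ψ k x) = d • κ k (mkl x) := by
    intro k x
    have h1 : eRA (ψ k x) = ⟨T k x, hTmem k x⟩ := by
      simp only [hψdef, LinearMap.coe_comp, Function.comp_apply, LinearEquiv.coe_coe]
      exact eRA.apply_symm_apply _
    have h3 := congrArg Subtype.val h1
    replace h3 : algebraMap R A (ψ k x) = T k x := h3
    simpa [hT] using h3
  have hmain : ∀ x : X, mkl (∑ k, ψ k x • xe k) = mkl (d • x) := by
    intro x
    rw [map_sum, map_smul]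
    calc ∑ k, mkl (ψ k x • xe k)
        = ∑ k, (algebraMap R A (ψ k x)) • mkl (xe k) := by
          refine Finset.sum_congr rfl fun k _ => ?_
          rw [map_smul, algebraMap_smul]
      _ = ∑ k, (d • κ k (mkl x)) • mkl (xe k) := by simp_rw [hψ]
      _ = d • ∑ k, κ k (mkl x) • mkl (xe k) := by
          rw [Finset.smul_sum]
          exact Finset.sum_congr rfl fun k _ => (smul_assoc d _ _)
      _ = d • mkl x := by rw [hv (mkl x)]
  set F : X →ₗ[R] X := (∑ k, (ψ k).smulRight (xe k)) - d • LinearMap.id with hF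
  have hFapp : ∀ x : X, F x = ∑ k, ψ k x • xe k - d • x := by
    intro x
    simp [hF, LinearMap.sum_apply, LinearMap.smulRight_apply]
  have hker : ∀ x : X, ∃ s : S, (s : R) • F x = 0 := by
    intro x
    have h0 : mkl (F x) = 0 := by
      rw [hFapp, map_sub, hmain, sub_self]
    have h0' : LocalizedModule.mk (F x) (1 : S) = LocalizedModule.mk 0 (1 : S) := by
      rw [LocalizedModule.zero_mk]
      exact h0
    obtain ⟨w, hw⟩ := LocalizedModule.mk_eq.mp h0'
    refine ⟨w, ?_⟩
    simpa [Submonoid.smul_def] using hw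
  choose st hst using fun t => hker (g t)
  set e0 : R := ∏ t, (st t : R) with he0
  have he0S : e0 ∈ S := Submonoid.prod_mem S (fun t _ => (st t).2)
  have hL : ∀ x : X, e0 • F x = 0 := by
    intro x
    have hx : x ∈ Submodule.span R (Set.range g) := by rw [hg]; trivial
    induction hx using Submodule.span_induction with
    | mem y hy =>
      obtain ⟨t, rfl⟩ := hy
      obtain ⟨e', he'⟩ := Finset.dvd_prod_of_mem (fun t => ((st t : R))) (Finset.mem_univ t)
      rw [he0, he', mul_comm, mul_smul, hst t, smul_zero]
    | zero => rw [map_zero, smul_zero]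
    | add y z _ _ hy hz => rw [map_add, smul_add, hy, hz, add_zero]
    | smul r y _ hy => rw [map_smul, smul_comm, hy, smul_zero]
  refine ⟨e0 * d, S.mul_mem he0S hdS, n, xe, fun k => e0 • ψ k, fun v => ?_⟩
  have h1 : (∑ k, ((e0 • ψ k) v) • xe k : X) = e0 • ∑ k, ψ k v • xe k := by
    rw [Finset.smul_sum]
    exact Finset.sum_congr rfl fun k _ => by
      simp only [LinearMap.smul_apply, smul_eq_mul, smul_smul]
  have h3 : e0 • ((∑ k, ψ k v • xe k : X) - d • v) = 0 := by
    rw [← hFapp v]; exact hL v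
  have h4 : e0 • (∑ k, ψ k v • xe k : X) = e0 • d • v := by
    rw [smul_sub] at h3; exact sub_eq_zero.mp h3
  rw [h1, h4, smul_smul]

end Localized

/-! ### The localization of a Noetherian integrally closed domain at an associated prime of a
principal ideal is a DVR -/

section DVR

variable {R : Type*} [CommRing R] [IsDomain R] [IsNoetherianRing R] [IsIntegrallyClosed R]

theorem dvr_at_ass {c : R} (hc : c ≠ 0) {P : Ideal R} [P.IsPrime]
    (hP : IsAssociatedPrime P (R ⧸ (Ideal.span {c} : Ideal R))) :
    IsDiscreteValuationRing (Localization.AtPrime P) := by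
  obtain ⟨hPp, z, hz⟩ := isAssociatedPrime_iff.mp hP
  obtain ⟨d, rfl⟩ := Submodule.Quotient.mk_surjective _ z
  haveI := hPp
  have hmem : ∀ r : R, r ∈ P ↔ r * d ∈ Ideal.span {c} := by
    intro r
    rw [hz, Submodule.mem_colon_singleton, Submodule.mem_bot, ← Submodule.Quotient.mk_smul,
      Submodule.Quotient.mk_eq_zero, smul_eq_mul]
  have hdP : d ∉ Ideal.span {c} := by
    intro h
    have h1 : (1 : R) ∈ P := by rw [hmem]; simpa using h
    exact hPp.ne_top (Ideal.eq_top_iff_one P |>.mpr h1)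
  have hcP : c ∈ P := (hmem c).mpr (Ideal.mem_span_singleton.mpr ⟨d, rfl⟩)
  set A := Localization.AtPrime P with hA
  haveI : IsNoetherianRing A := IsLocalization.isNoetherianRing P.primeCompl A ‹_›
  haveI : IsDomain A := IsLocalization.isDomain_of_local_atPrime hPp
  haveI : IsIntegrallyClosed A :=
    isIntegrallyClosed_of_isLocalization A P.primeCompl P.primeCompl_le_nonZeroDivisors
  have hcA : algebraMap R A c ≠ 0 :=
    IsLocalization.to_map_ne_zero_of_mem_nonZeroDivisors A P.primeCompl_le_nonZeroDivisors
      (mem_nonZeroDivisors_of_ne_zero hc)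
  have hnf : ¬IsField A := by
    rw [IsLocalRing.isField_iff_maximalIdeal_eq]
    intro hbot
    have hcmem : algebraMap R A c ∈ IsLocalRing.maximalIdeal A :=
      (IsLocalization.AtPrime.to_map_mem_maximal_iff A P c).mpr hcP
    rw [hbot] at hcmem
    exact hcA (by simpa using hcmem)
  have halg : Function.Injective (algebraMap R A) :=
    IsLocalization.injective A P.primeCompl_le_nonZeroDivisors
  have hmul : ∀ (r b : R) (s : P.primeCompl),
      algebraMap R A r * IsLocalization.mk' A b s = IsLocalization.mk' A (r * b) s := by
    intro r b s
    rw [IsLocalization.mul_mk'_eq_mk'_of_mul]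
  have hdiv : ∀ m ∈ IsLocalRing.maximalIdeal A,
      ∃ k : A, algebraMap R A c * k = algebraMap R A d * m := by
    intro m hm
    obtain ⟨a, s, rfl⟩ := IsLocalization.exists_mk'_eq P.primeCompl m
    have haP : a ∈ P := (IsLocalization.AtPrime.mk'_mem_maximal_iff A P a s).mp hm
    obtain ⟨e, he⟩ := Ideal.mem_span_singleton.mp ((hmem a).mp haP)
    refine ⟨IsLocalization.mk' A e s, ?_⟩
    rw [hmul, hmul, mul_comm d a, he]
  by_cases hcase : ∃ m ∈ IsLocalRing.maximalIdeal A, ∃ k : A,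
      algebraMap R A c * k = algebraMap R A d * m ∧ k ∉ IsLocalRing.maximalIdeal A
  · obtain ⟨m₀, hm₀, k₀, hk₀, hk₀u⟩ := hcase
    have hk₀unit : IsUnit k₀ := by
      by_contra h
      exact hk₀u ((IsLocalRing.mem_maximalIdeal k₀).mpr h)
    have hprin : IsLocalRing.maximalIdeal A = Ideal.span {m₀} := by
      apply le_antisymm
      · intro m hm
        obtain ⟨km, hkm⟩ := hdiv m hm
        have hkey : km * m₀ = k₀ * m := by
          apply mul_left_cancel₀ hcA
          calc algebraMap R A c * (km * m₀) = (algebraMap R A c * km) * m₀ := by ring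
            _ = (algebraMap R A d * m) * m₀ := by rw [hkm]
            _ = (algebraMap R A d * m₀) * m := by ring
            _ = (algebraMap R A c * k₀) * m := by rw [hk₀]
            _ = algebraMap R A c * (k₀ * m) := by ring
        obtain ⟨ku, hku⟩ := hk₀unit
        rw [Ideal.mem_span_singleton']
        refine ⟨↑ku⁻¹ * km, ?_⟩
        rw [mul_assoc, hkey, ← hku, ← mul_assoc, Units.inv_mul, one_mul]
      · rw [Ideal.span_le, Set.singleton_subset_iff]
        exact hm₀
    have hp : Submodule.IsPrincipal (IsLocalRing.maximalIdeal A) := ⟨⟨m₀, hprin⟩⟩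
    exact ((IsDiscreteValuationRing.TFAE A hnf).out 4 0).mp hp
  · push_neg at hcase
    exfalso
    set F := FractionRing R with hF
    have hcF : algebraMap A F (algebraMap R A c) ≠ 0 := by
      rw [Ne, IsFractionRing.to_map_eq_zero_iff]
      exact hcA
    set x : F := algebraMap A F (algebraMap R A d) / algebraMap A F (algebraMap R A c) with hx
    set M : Submodule A F :=
      Submodule.map (Algebra.linearMap A F) (IsLocalRing.maximalIdeal A) with hM
    have hsmul : ∀ n ∈ M, x • n ∈ M := by
      rintro _ ⟨m, hm, rfl⟩
      obtain ⟨km, hkm⟩ := hdiv m hm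
      have hkmax : km ∈ IsLocalRing.maximalIdeal A := hcase m hm km hkm
      refine ⟨km, hkmax, ?_⟩
      show algebraMap A F km = x • algebraMap A F m
      rw [smul_eq_mul, hx, div_mul_eq_mul_div, eq_div_iff hcF, ← map_mul, ← map_mul]
      exact congrArg _ (by rw [mul_comm]; exact hkm)
    have hint : IsIntegral A x := by
      refine isIntegral_of_smul_mem_submodule M ?_ ?_ x hsmul
      · rw [Submodule.ne_bot_iff]
        refine ⟨algebraMap A F (algebraMap R A c),
          ⟨algebraMap R A c, (IsLocalization.AtPrime.to_map_mem_maximal_iff A P c).mpr hcP, rfl⟩, ?_⟩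
        rw [Ne, IsFractionRing.to_map_eq_zero_iff]
        exact hcA
      · exact Submodule.FG.map _ (IsNoetherian.noetherian _)
    obtain ⟨y, hy⟩ := IsIntegrallyClosed.algebraMap_eq_of_integral hint
    have hdy : algebraMap R A d = algebraMap R A c * y := by
      apply IsFractionRing.injective A F
      rw [map_mul, hy, hx, mul_div_cancel₀ _ hcF]
    obtain ⟨a, s, rfl⟩ := IsLocalization.exists_mk'_eq P.primeCompl y
    have h1 : algebraMap R A (d * (s : R)) = algebraMap R A (c * a) := by
      rw [map_mul, map_mul, hdy, mul_assoc,
        show IsLocalization.mk' A a s * algebraMap R A (s : R) = algebraMap R A a from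
          IsLocalization.mk'_spec A a s]
    have h2 : d * (s : R) = c * a := halg h1
    have h3 : (s : R) ∈ P := (hmem s).mpr
      (by rw [mul_comm (s : R) d, h2]; exact Ideal.mem_span_singleton.mpr ⟨a, rfl⟩)
    exact s.2 h3

variable {X : Type*} [AddCommGroup X] [Module R X] [Module.Finite R X]

theorem nzsd_localized (S : Submonoid R) (hS : S ≤ nonZeroDivisors R)
    [NoZeroSMulDivisors R X] :
    NoZeroSMulDivisors (Localization S) (LocalizedModule S X) := by
  constructor
  intro a v hav
  obtain ⟨r, s, rfl⟩ := IsLocalization.exists_mk'_eq S a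
  induction v using LocalizedModule.induction_on with
  | _ m t =>
    rw [← Localization.mk_eq_mk', LocalizedModule.mk_smul_mk] at hav
    rw [show (0 : LocalizedModule S X) = LocalizedModule.mk 0 (1 : S) from
      (LocalizedModule.zero_mk 1).symm, LocalizedModule.mk_eq] at hav
    obtain ⟨w, hw⟩ := hav
    simp only [one_smul, smul_zero, Submonoid.smul_def, smul_smul] at hw
    rcases eq_or_ne r 0 with rfl | hr
    · left
      exact IsLocalization.mk'_zero _
    · right
      have hwr : (w : R) * r ≠ 0 :=
        mul_ne_zero (nonZeroDivisors.ne_zero (hS w.2)) hr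
      have hm : m = 0 := by
        have := smul_eq_zero.mp hw
        tauto
      rw [hm, LocalizedModule.zero_mk]

theorem exists_hasQB_ne_zero : ∃ c : R, c ≠ 0 ∧ HasQB R X c := by
  haveI : Module.Free (Localization (nonZeroDivisors R)) (LocalizedModule (nonZeroDivisors R) X) :=
    inferInstanceAs (Module.Free (FractionRing R) (LocalizedModule (nonZeroDivisors R) X))
  obtain ⟨c, hcS, hc⟩ := exists_hasQB_mem (X := X) (nonZeroDivisors R) le_rfl
  exact ⟨c, nonZeroDivisors.ne_zero hcS, hc⟩

theorem exists_hasQB_notMem_ass [NoZeroSMulDivisors R X] {c : R} (hc : c ≠ 0) {P : Ideal R}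
    (hP : IsAssociatedPrime P (R ⧸ (Ideal.span {c} : Ideal R))) :
    ∃ b : R, b ∉ P ∧ HasQB R X b := by
  haveI := hP.isPrime
  haveI hdvr : IsDiscreteValuationRing (Localization.AtPrime P) := dvr_at_ass hc hP
  haveI : IsDomain (Localization.AtPrime P) := IsLocalization.isDomain_of_local_atPrime hP.isPrime
  haveI : NoZeroSMulDivisors (Localization.AtPrime P) (LocalizedModule P.primeCompl X) :=
    nzsd_localized P.primeCompl P.primeCompl_le_nonZeroDivisors
  letI : Module.FinitePresentation R X := Module.finitePresentation_of_finite R X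
  haveI : Module.Finite (Localization P.primeCompl) (LocalizedModule P.primeCompl X) :=
    inferInstance
  haveI : Module.Free (Localization.AtPrime P) (LocalizedModule P.primeCompl X) :=
    Module.free_of_finite_type_torsion_free'
  obtain ⟨b, hbS, hb⟩ := exists_hasQB_mem (X := X) P.primeCompl P.primeCompl_le_nonZeroDivisors
  exact ⟨b, hbS, hb⟩

end DVR

/-! ### The core bijectivity -/

section Core

variable {R : Type*} [CommRing R]
variable {X Y W : Type*} [AddCommGroup X] [Module R X] [AddCommGroup Y] [Module R Y]
  [AddCommGroup W] [Module R W]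

variable (R X Y W) in
/-- The natural map `Hom(Hom(X,Y), W) → Hom(Y, Hom(X*, W))`. -/
def nakayamaPhi : ((X →ₗ[R] Y) →ₗ[R] W) →ₗ[R] (Y →ₗ[R] ((X →ₗ[R] R) →ₗ[R] W)) where
  toFun g :=
    { toFun := fun y =>
        { toFun := fun f => g (f.smulRight y)
          map_add' := fun f₁ f₂ => by
            show g ((f₁ + f₂).smulRight y) = g (f₁.smulRight y) + g (f₂.smulRight y)
            have hsr : (f₁ + f₂).smulRight y = f₁.smulRight y + f₂.smulRight y :=
              LinearMap.ext fun v => by simp [add_smul]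
            rw [hsr, map_add]
          map_smul' := fun r f => by
            show g ((r • f).smulRight y) = (RingHom.id R) r • g (f.smulRight y)
            have hsr : (r • f).smulRight y = r • f.smulRight y :=
              LinearMap.ext fun v => by simp [mul_smul]
            rw [RingHom.id_apply, hsr, map_smul] }
      map_add' := fun y₁ y₂ => LinearMap.ext fun f => by
        show g (f.smulRight (y₁ + y₂)) = g (f.smulRight y₁) + g (f.smulRight y₂)
        have hsr : f.smulRight (y₁ + y₂) = f.smulRight y₁ + f.smulRight y₂ :=
          LinearMap.ext fun v => by simp [smul_add]
        rw [hsr, map_add]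
      map_smul' := fun r y => LinearMap.ext fun f => by
        show g (f.smulRight (r • y)) = r • g (f.smulRight y)
        have hsr : f.smulRight (r • y) = r • f.smulRight y :=
          LinearMap.ext fun v => by
            simp only [LinearMap.smulRight_apply, LinearMap.smul_apply]
            rw [smul_comm]
        rw [hsr, map_smul] }
  map_add' g₁ g₂ := LinearMap.ext fun y => LinearMap.ext fun f => rfl
  map_smul' r g := LinearMap.ext fun y => LinearMap.ext fun f => rfl

@[simp] theorem nakayamaPhi_apply (g : (X →ₗ[R] Y) →ₗ[R] W) (y : Y) (f : X →ₗ[R] R) :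
    nakayamaPhi R X Y W g y f = g (f.smulRight y) := rfl

variable (Y) in
/-- Evaluation combination: `h ↦ ∑ i, q (h (x i)) (f i)`. -/
def evalComb (q : Y →ₗ[R] ((X →ₗ[R] R) →ₗ[R] W)) {n : ℕ} (x : Fin n → X)
    (f : Fin n → (X →ₗ[R] R)) : (X →ₗ[R] Y) →ₗ[R] W where
  toFun h := ∑ i, q (h (x i)) (f i)
  map_add' h₁ h₂ := by
    simp only [LinearMap.add_apply, map_add]
    rw [← Finset.sum_add_distrib]
  map_smul' r h := by
    simp only [LinearMap.smul_apply, map_smul, RingHom.id_apply]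
    rw [Finset.smul_sum]

theorem evalComb_apply (q : Y →ₗ[R] ((X →ₗ[R] R) →ₗ[R] W)) {n : ℕ} (x : Fin n → X)
    (f : Fin n → (X →ₗ[R] R)) (h : X →ₗ[R] Y) :
    evalComb Y q x f h = ∑ i, q (h (x i)) (f i) := rfl

/-- The key commutation: two quasi-bases give proportional evaluation combinations. -/
theorem evalComb_swap (q : Y →ₗ[R] ((X →ₗ[R] R) →ₗ[R] W))
    {c b : R} {n m : ℕ} {x : Fin n → X} {f : Fin n → (X →ₗ[R] R)}
    {x' : Fin m → X} {f' : Fin m → (X →ₗ[R] R)}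
    (hqb : ∀ v : X, ∑ i, f i v • x i = c • v)
    (hqb' : ∀ v : X, ∑ j, f' j v • x' j = b • v)
    (h : X →ₗ[R] Y) :
    b • evalComb Y q x f h = c • evalComb Y q x' f' h := by
  rw [evalComb_apply, evalComb_apply]
  calc b • ∑ i, q (h (x i)) (f i)
      = ∑ i, q (h (b • x i)) (f i) := by
        rw [Finset.smul_sum]
        exact Finset.sum_congr rfl fun i _ => by rw [map_smul, map_smul, LinearMap.smul_apply]
    _ = ∑ i, q (h (∑ j, f' j (x i) • x' j)) (f i) := by
        refine Finset.sum_congr rfl fun i _ => ?_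
        rw [hqb' (x i)]
    _ = ∑ i, ∑ j, f' j (x i) • q (h (x' j)) (f i) := by
        refine Finset.sum_congr rfl fun i _ => ?_
        rw [map_sum, map_sum, LinearMap.sum_apply]
        exact Finset.sum_congr rfl fun j _ => by
          rw [map_smul, map_smul, LinearMap.smul_apply]
    _ = ∑ j, ∑ i, f' j (x i) • q (h (x' j)) (f i) := Finset.sum_comm
    _ = ∑ j, q (h (x' j)) (∑ i, f' j (x i) • f i) := by
        refine Finset.sum_congr rfl fun j _ => ?_
        rw [map_sum]
        exact Finset.sum_congr rfl fun i _ => by rw [map_smul]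
    _ = ∑ j, q (h (x' j)) (c • f' j) := by
        refine Finset.sum_congr rfl fun j _ => ?_
        rw [HasQB.expand hqb (f' j)]
    _ = c • ∑ j, q (h (x' j)) (f' j) := by
        rw [Finset.smul_sum]
        exact Finset.sum_congr rfl fun j _ => by rw [map_smul]

end Core

/-! ### Bijectivity of the natural map for `W = Hom(D, R)` -/

section Bijective

variable {R : Type*} [CommRing R] [IsDomain R] [IsNoetherianRing R] [IsIntegrallyClosed R]
variable {X Y D : Type*} [AddCommGroup X] [Module R X] [Module.Finite R X]
  [NoZeroSMulDivisors R X] [AddCommGroup Y] [Module R Y] [AddCommGroup D] [Module R D]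

theorem dualW_cancel {c : R} (hc : c ≠ 0) {w w' : D →ₗ[R] R} (h : c • w = c • w') : w = w' := by
  ext v
  have := LinearMap.congr_fun h v
  simp only [LinearMap.smul_apply, smul_eq_mul] at this
  exact mul_left_cancel₀ hc this

theorem dualW_div {c : R} (hc : c ≠ 0) (w : D →ₗ[R] R) (hw : ∀ v : D, ∃ a, w v = c * a) :
    ∃ γ : D →ₗ[R] R, c • γ = w := by
  choose a ha using hw
  refine ⟨{ toFun := a, map_add' := ?_, map_smul' := ?_ }, ?_⟩
  · intro v₁ v₂
    apply mul_left_cancel₀ hc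
    rw [← ha, map_add, ha, ha, mul_add]
  · intro r v
    simp only [RingHom.id_apply, smul_eq_mul]
    apply mul_left_cancel₀ hc
    rw [← ha, map_smul, smul_eq_mul, ha]
    ring
  · ext v
    simp only [LinearMap.smul_apply, LinearMap.coe_mk, AddHom.coe_mk, smul_eq_mul]
    rw [← ha]

theorem nakayamaPhi_bijective :
    Function.Bijective (nakayamaPhi R X Y (D →ₗ[R] R)) := by
  obtain ⟨c, hc0, n, x, f, hqb⟩ := exists_hasQB_ne_zero (R := R) (X := X)
  constructor
  · -- injectivity
    have hzero : ∀ g : (X →ₗ[R] Y) →ₗ[R] (D →ₗ[R] R),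
        nakayamaPhi R X Y (D →ₗ[R] R) g = 0 → g = 0 := by
      intro g hg
      refine LinearMap.ext fun h => ?_
      have h1 : c • h = ∑ i, (f i).smulRight (h (x i)) := HasQB.smul_hom hqb h
      have h2 : c • g h = 0 := by
        rw [← map_smul, h1, map_sum]
        refine Finset.sum_eq_zero fun i _ => ?_
        have := LinearMap.congr_fun (LinearMap.congr_fun hg (h (x i))) (f i)
        simpa using this
      have h3 : c • g h = c • (0 : D →ₗ[R] R) := by rw [smul_zero]; exact h2
      have := dualW_cancel hc0 h3
      simpa using this
    intro g₁ g₂ hg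
    have := hzero (g₁ - g₂) (by
      ext y f₀ v; simpa [sub_eq_zero] using LinearMap.congr_fun (LinearMap.congr_fun (LinearMap.congr_fun hg y) f₀) v)
    exact sub_eq_zero.mp this
  · -- surjectivity
    intro q
    set A := evalComb Y q x f with hAdef
    have key : ∀ (h : X →ₗ[R] Y) (v : D), ∃ a, A h v = c * a := by
      intro h v
      by_contra hna
      push_neg at hna
      have hmem : A h v ∉ Ideal.span {c} := by
        intro hm
        obtain ⟨e, he⟩ := Ideal.mem_span_singleton.mp hm
        exact hna e he
      have hr : (Submodule.Quotient.mk (A h v) : R ⧸ (Ideal.span {c} : Ideal R)) ≠ 0 := by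
        rwa [Ne, Submodule.Quotient.mk_eq_zero]
      obtain ⟨P, hP, hle⟩ := exists_le_isAssociatedPrime_of_isNoetherianRing R _ hr
      have hJ : qbIdeal R X ≤ P := by
        intro b hb
        obtain ⟨m, x', f', hqb'⟩ := hb
        apply hle
        rw [Submodule.mem_colon_singleton, Submodule.mem_bot, ← Submodule.Quotient.mk_smul,
          Submodule.Quotient.mk_eq_zero, smul_eq_mul]
        have hswap := evalComb_swap q hqb hqb' h
        have := LinearMap.congr_fun hswap v
        simp only [LinearMap.smul_apply, smul_eq_mul] at this
        rw [← hAdef] at this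
        rw [this]
        exact Ideal.mul_mem_right _ _ (Ideal.mem_span_singleton_self c)
      haveI := hP.isPrime
      obtain ⟨b, hbP, hbQ⟩ := exists_hasQB_notMem_ass (X := X) hc0 hP
      exact hbP (hJ hbQ)
    choose γ hγ using fun h => dualW_div hc0 (A h) (key h)
    have hcanc := fun {w w' : D →ₗ[R] R} => dualW_cancel (D := D) hc0 (w := w) (w' := w')
    refine ⟨{ toFun := γ, map_add' := ?_, map_smul' := ?_ }, ?_⟩
    · intro h₁ h₂
      apply hcanc
      rw [hγ, smul_add, hγ, hγ, map_add]
    · intro r h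
      simp only [RingHom.id_apply]
      apply hcanc
      rw [hγ, smul_comm, hγ, map_smul]
    · -- nakayamaPhi G = q
      refine LinearMap.ext fun y => LinearMap.ext fun f₀ => ?_
      show γ (f₀.smulRight y) = q y f₀
      apply hcanc
      rw [hγ]
      have h1 : A (f₀.smulRight y) = ∑ i, f₀ (x i) • q y (f i) := by
        rw [hAdef, evalComb_apply]
        refine Finset.sum_congr rfl fun i _ => ?_
        rw [LinearMap.smulRight_apply, map_smul, LinearMap.smul_apply]
      rw [h1]
      have h2 : ∑ i, f₀ (x i) • q y (f i) = q y (∑ i, f₀ (x i) • f i) := by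
        rw [map_sum]
        exact Finset.sum_congr rfl fun i _ => by rw [map_smul]
      rw [h2, HasQB.expand hqb f₀, map_smul]

end Bijective

/-! ### Final assembly -/

theorem nzsd_of_reflexive {R X : Type*} [CommRing R] [IsDomain R] [AddCommGroup X] [Module R X]
    [Module.IsReflexive R X] : NoZeroSMulDivisors R X := by
  constructor
  intro c v h
  rcases eq_or_ne c 0 with rfl | hc
  · exact Or.inl rfl
  right
  have h1 : c • (Module.evalEquiv R X) v = 0 := by rw [← map_smul, h, map_zero]
  have h2 : (Module.evalEquiv R X) v = 0 := by
    ext φ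
    have := LinearMap.congr_fun h1 φ
    simp only [LinearMap.smul_apply, smul_eq_mul, LinearMap.zero_apply] at this ⊢
    exact (mul_eq_zero.mp this).resolve_left hc
  exact (Module.evalEquiv R X).injective (a₂ := 0) (by rw [map_zero]; exact h2)

theorem nakayama_functor_adjunction (R : Type*) [CommRing R] [IsDomain R]
    [IsNoetherianRing R] [IsIntegrallyClosed R] (hCM : IsCohenMacaulayRing R)
    (ω : Type*) [AddCommGroup ω] [Module R ω] [Module.Finite R ω] [Module.IsReflexive R ω]
    (hω : Module.finrank (FractionRing R) (FractionRing R ⊗[R] ω) = 1)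
    (X Y : Type*) [AddCommGroup X] [Module R X] [Module.Finite R X] [Module.IsReflexive R X]
    [AddCommGroup Y] [Module R Y] [Module.Finite R Y] [Module.IsReflexive R Y] :
    Nonempty ((Y →ₗ[R] ((X →ₗ[R] R) →ₗ[R] ω)) ≃ₗ[R] ((X →ₗ[R] Y) →ₗ[R] ω)) := by
  haveI : NoZeroSMulDivisors R X := nzsd_of_reflexive
  -- identify `ω` with the double dual of `ω`
  let e : ω ≃ₗ[R] ((ω →ₗ[R] R) →ₗ[R] R) := Module.evalEquiv R ω
  let E1 : (Y →ₗ[R] ((X →ₗ[R] R) →ₗ[R] ω)) ≃ₗ[R]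
      (Y →ₗ[R] ((X →ₗ[R] R) →ₗ[R] ((ω →ₗ[R] R) →ₗ[R] R))) :=
    LinearEquiv.congrRight (LinearEquiv.congrRight e)
  let Ecore : (Y →ₗ[R] ((X →ₗ[R] R) →ₗ[R] ((ω →ₗ[R] R) →ₗ[R] R))) ≃ₗ[R]
      ((X →ₗ[R] Y) →ₗ[R] ((ω →ₗ[R] R) →ₗ[R] R)) :=
    (LinearEquiv.ofBijective _ (nakayamaPhi_bijective (R := R) (X := X) (Y := Y)
      (D := ω →ₗ[R] R))).symm
  let E2 : ((X →ₗ[R] Y) →ₗ[R] ((ω →ₗ[R] R) →ₗ[R] R)) ≃ₗ[R] ((X →ₗ[R] Y) →ₗ[R] ω) :=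
    LinearEquiv.congrRight e.symm
  exact ⟨(E1.trans Ecore).trans E2⟩
end
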